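/- Let H be an N×N Hermitian matrix over ℂ with spectral norm ‖H‖ ≤ 1, let β ≥ 0, and let à be an N×N matrix over ℂ satisfying ‖Ã − e^{−β/2}·exp(−βH/2)‖ ≤ ε′ for some 0 < ε′ ≤ 1. Then the actual success probability p̃ := Tr[Ã·Ã†]/N of the approximate quantum coin and the ideal success probability p := e^{−β}·Tr[exp(−βH)]/N satisfy |p̃ − p| ≤ 3ε′. -/

import Mathlib

open scoped Matrix Matrix.Norms.L2Operator

lemma my_norm_exp_le {N : ℕ} (hN : 0 < N) (X : Matrix (Fin N) (Fin N) ℂ) :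
    ‖NormedSpace.exp X‖ ≤ Real.exp ‖X‖ := by
  haveI : Nontrivial (Matrix (Fin N) (Fin N) ℂ) := by
    haveI : Nonempty (Fin N) := ⟨⟨0, hN⟩⟩
    infer_instance
  rw [NormedSpace.exp_eq_tsum ℂ]
  have hsum : Summable fun n : ℕ => ‖((n.factorial : ℂ))⁻¹ • X ^ n‖ := by
    have := NormedSpace.norm_expSeries_summable (𝕂 := ℂ) X
    simpa [NormedSpace.expSeries_apply_eq] using this
  have hbd : ∀ n : ℕ, ‖((n.factorial : ℂ))⁻¹ • X ^ n‖ ≤ ‖X‖ ^ n / n.factorial := by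
    intro n
    rw [norm_smul, div_eq_inv_mul]
    simp only [norm_inv, Complex.norm_natCast]
    gcongr
    rcases Nat.eq_zero_or_pos n with h | h
    · subst h; simp [CStarRing.norm_one]
    · exact norm_pow_le' X h
  calc ‖∑' n : ℕ, ((n.factorial : ℂ))⁻¹ • X ^ n‖
      ≤ ∑' n : ℕ, ‖((n.factorial : ℂ))⁻¹ • X ^ n‖ := norm_tsum_le_tsum_norm hsum
    _ ≤ ∑' n : ℕ, ‖X‖ ^ n / n.factorial :=
        Summable.tsum_le_tsum hbd hsum (Real.summable_pow_div_factorial _)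
    _ = Real.exp ‖X‖ := by
        rw [Real.exp_eq_exp_ℝ, NormedSpace.exp_eq_tsum_div]

lemma my_coord_le {N : ℕ} (v : EuclideanSpace ℂ (Fin N)) (i : Fin N) : ‖v i‖ ≤ ‖v‖ := by
  rw [EuclideanSpace.norm_eq]
  rw [show ‖v i‖ = Real.sqrt (‖v i‖ ^ 2) from (Real.sqrt_sq (norm_nonneg _)).symm]
  apply Real.sqrt_le_sqrt
  exact Finset.single_le_sum (f := fun j => ‖v j‖ ^ 2) (fun j _ => sq_nonneg _)
    (Finset.mem_univ i)

lemma my_entry_le {N : ℕ} (M : Matrix (Fin N) (Fin N) ℂ) (i : Fin N) :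
    ‖M i i‖ ≤ ‖M‖ := by
  have h := M.l2_opNorm_mulVec (EuclideanSpace.single i (1 : ℂ))
  rw [EuclideanSpace.norm_single, norm_one, mul_one] at h
  refine le_trans ?_ ((my_coord_le _ i).trans h)
  have : (M *ᵥ (EuclideanSpace.single i (1 : ℂ))) i = M i i := by
    simp [Matrix.mulVec, dotProduct, EuclideanSpace.single_apply]
  show ‖M i i‖ ≤ ‖(M *ᵥ EuclideanSpace.single i (1 : ℂ)) i‖
  rw [this]

lemma my_trace_le {N : ℕ} (M : Matrix (Fin N) (Fin N) ℂ) :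
    ‖M.trace‖ ≤ N * ‖M‖ := by
  calc ‖M.trace‖ ≤ ∑ i, ‖M i i‖ :=
        norm_sum_le _ _
    _ ≤ ∑ _i : Fin N, ‖M‖ := Finset.sum_le_sum fun i _ => my_entry_le M i
    _ = N * ‖M‖ := by simp [Finset.sum_const, nsmul_eq_mul]

/-- If `Ã` approximates the sub-normalized propagator
`e^{−β/2}·exp(−βH/2)` to spectral-norm error `ε′ ∈ (0,1]`, and `‖H‖ ≤ 1`, then the
actual success probability `p̃ = Tr[Ã Ã†]/N` is `3ε′`-close to the ideal success
probability `p = e^{−β} Tr[exp(−βH)]/N`. -/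
theorem approximate_coin_probability_bias
    {N : ℕ} (hN : 0 < N) (H : Matrix (Fin N) (Fin N) ℂ) (hH : H.IsHermitian)
    (hHnorm : ‖H‖ ≤ 1) (β : ℝ) (hβ : 0 ≤ β)
    (Atil : Matrix (Fin N) (Fin N) ℂ) (ε' : ℝ) (hε'0 : 0 < ε') (hε'1 : ε' ≤ 1)
    (happrox : ‖Atil - Real.exp (-β / 2) • NormedSpace.exp ((-(β : ℂ) / 2) • H)‖ ≤ ε') :
    ‖(Atil * Atilᴴ).trace / (N : ℂ) -
        (Real.exp (-β) : ℂ) * (NormedSpace.exp ((-(β : ℂ)) • H)).trace / (N : ℂ)‖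
      ≤ 3 * ε' := by
  set A : Matrix (Fin N) (Fin N) ℂ :=
    Real.exp (-β / 2) • NormedSpace.exp ((-(β : ℂ) / 2) • H) with hA
  have hMH : ((-(β : ℂ) / 2) • H)ᴴ = (-(β : ℂ) / 2) • H := by
    rw [Matrix.conjTranspose_smul, hH.eq]
    congr 1
    simp [Complex.ext_iff]
  have hconj : Aᴴ = A := by
    rw [hA, Matrix.conjTranspose_smul, star_trivial, ← Matrix.exp_conjTranspose, hMH]
  have hAA : A * Aᴴ = (Real.exp (-β) : ℂ) • NormedSpace.exp ((-(β : ℂ)) • H) := by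
    rw [hconj, hA, Matrix.smul_mul, Matrix.mul_smul, smul_smul, ← Real.exp_add,
      ← Matrix.exp_add_of_commute _ _ (Commute.refl _), ← add_smul]
    have h1 : -β / 2 + -β / 2 = -β := by ring
    have h2 : -(β : ℂ) / 2 + -(β : ℂ) / 2 = -(β : ℂ) := by ring
    rw [h1, h2]
    ext i j
    simp [Complex.real_smul]
  have hAnorm : ‖A‖ ≤ 1 := by
    rw [hA, norm_smul]
    have hc : ‖(-(β : ℂ) / 2)‖ = β / 2 := by
      rw [norm_div, norm_neg, Complex.norm_real, Real.norm_eq_abs, abs_of_nonneg hβ]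
      norm_num
    have h1 : ‖NormedSpace.exp ((-(β : ℂ) / 2) • H)‖ ≤ Real.exp (β / 2) := by
      refine (my_norm_exp_le hN _).trans ?_
      apply Real.exp_le_exp.mpr
      rw [norm_smul, hc]
      calc β / 2 * ‖H‖ ≤ β / 2 * 1 := by gcongr
        _ = β / 2 := mul_one _
    calc ‖(Real.exp (-β / 2) : ℝ)‖ * ‖NormedSpace.exp ((-(β : ℂ) / 2) • H)‖
        ≤ Real.exp (-β / 2) * Real.exp (β / 2) := by
          rw [Real.norm_eq_abs, abs_of_pos (Real.exp_pos _)]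
          gcongr
      _ = 1 := by
          rw [← Real.exp_add]
          have : -β / 2 + β / 2 = 0 := by ring
          rw [this, Real.exp_zero]
  have hAtil : ‖Atil‖ ≤ 1 + ε' := by
    have hid : Atil - A + A = Atil := by abel
    calc ‖Atil‖ = ‖Atil - A + A‖ := by rw [hid]
      _ ≤ ‖Atil - A‖ + ‖A‖ := norm_add_le _ _
      _ ≤ ε' + 1 := add_le_add happrox hAnorm
      _ = 1 + ε' := by ring
  have hdiff : ‖Atil * Atilᴴ - A * Aᴴ‖ ≤ 3 * ε' := by
    have hE : Atil * Atilᴴ - A * Aᴴ = (Atil - A) * Atilᴴ + A * (Atil - A)ᴴ := by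
      simp only [Matrix.conjTranspose_sub, Matrix.sub_mul, Matrix.mul_sub]
      abel
    have b1 : ‖Atil - A‖ * ‖Atil‖ ≤ ε' * (1 + ε') :=
      mul_le_mul happrox hAtil (norm_nonneg _) hε'0.le
    have b2 : ‖A‖ * ‖Atil - A‖ ≤ 1 * ε' :=
      mul_le_mul hAnorm happrox (norm_nonneg _) zero_le_one
    rw [hE]
    calc ‖(Atil - A) * Atilᴴ + A * (Atil - A)ᴴ‖
        ≤ ‖(Atil - A) * Atilᴴ‖ + ‖A * (Atil - A)ᴴ‖ := norm_add_le _ _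
      _ ≤ ‖Atil - A‖ * ‖Atilᴴ‖ + ‖A‖ * ‖(Atil - A)ᴴ‖ :=
          add_le_add (Matrix.l2_opNorm_mul _ _) (Matrix.l2_opNorm_mul _ _)
      _ = ‖Atil - A‖ * ‖Atil‖ + ‖A‖ * ‖Atil - A‖ := by
          rw [Matrix.l2_opNorm_conjTranspose, Matrix.l2_opNorm_conjTranspose]
      _ ≤ ε' * (1 + ε') + 1 * ε' := add_le_add b1 b2
      _ = 2 * ε' + ε' * ε' := by ring
      _ ≤ 2 * ε' + 1 * ε' := by gcongr
      _ = 3 * ε' := by ring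
  have key : (Atil * Atilᴴ).trace / (N : ℂ) -
      (Real.exp (-β) : ℂ) * (NormedSpace.exp ((-(β : ℂ)) • H)).trace / (N : ℂ)
      = (Atil * Atilᴴ - A * Aᴴ).trace / (N : ℂ) := by
    rw [Matrix.trace_sub, hAA, Matrix.trace_smul, smul_eq_mul, sub_div]
  rw [key, norm_div, Complex.norm_natCast]
  have hNpos : (0 : ℝ) < N := by exact_mod_cast hN
  rw [div_le_iff₀ hNpos]
  calc ‖(Atil * Atilᴴ - A * Aᴴ).trace‖
      ≤ N * ‖Atil * Atilᴴ - A * Aᴴ‖ := my_trace_le _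
    _ ≤ N * (3 * ε') := by gcongr
    _ = 3 * ε' * N := by ring
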